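/- Let E_J be a W-graph ideal with modules M(E_J,L) and M̃(E_J,L) and duality map η : M → M̃ determined by η(Γ₁) = Γ̃₁ and η(hΓ) = Φ(h)η(Γ). Then η(Γ_w) = ε_w Γ̃_w‾ for all w ∈ E_J, η is bijective, η commutes with the bar involutions, and its inverse θ satisfies θ(Γ̃₁) = Γ₁ and θ(hΓ̃) = Φ(h)θ(Γ̃). -/

import Mathlib

/-- The (strong) Bruhat order on a Coxeter group. -/
def bruhatLE {B W : Type*} [Group W] {M : CoxeterMatrix B} (cs : CoxeterSystem M W) :
    W → W → Prop :=
  Relation.ReflTransGen fun x y =>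
    ∃ t, cs.IsReflection t ∧ y = t * x ∧ cs.length x < cs.length y

/-- The set of minimal length left coset representatives of `W / W_J`. -/
def DJset {B W : Type*} [Group W] {M : CoxeterMatrix B} (cs : CoxeterSystem M W)
    (J : Set B) : Set W :=
  {w | ∀ j ∈ J, cs.length w < cs.length (w * cs.simple j)}


private theorem addHom_ext_basis {A M N ι : Type*} [CommRing A] [AddCommGroup M] [Module A M]
    [AddCommGroup N] (b : Module.Basis ι A M) {f g : M →+ N}
    (h : ∀ (a : A) (i : ι), f (a • b i) = g (a • b i)) : ∀ m, f m = g m := by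
  intro m
  rw [← b.linearCombination_repr m, Finsupp.linearCombination_apply, Finsupp.sum,
    map_sum, map_sum]
  exact Finset.sum_congr rfl fun i _ => h _ i

/-- Theorem 3.1 (II): for a `W`-graph ideal `E_J` with dual modules `M(E_J,L)`
(basis `Γ_w`) and `M̃(E_J,L)` (basis `Γ̃_w`), there is a unique additive map
`η : M → M̃` with `η(Γ₁) = Γ̃₁` and `η(hΓ) = Φ(h)η(Γ)`; moreover
`η(Γ_w) = ε_w Γ̃̄_w`, `η` commutes with the bar involutions, is bijective, and
its inverse `θ` satisfies `θ(Γ̃₁) = Γ₁` and `θ(hΓ̃) = Φ(h)θ(Γ̃)`. -/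
theorem stmt_14 {B W : Type*} [Group W] {CM : CoxeterMatrix B} (cs : CoxeterSystem CM W)
    (J : Set B) (E : Set W)
    (hE1 : (1 : W) ∈ E) (hEDJ : E ⊆ DJset cs J)
    (hIdeal : ∀ w ∈ E, ∀ u z : W, w = z * u →
      cs.length w = cs.length z + cs.length u → u ∈ E)
    {A : Type*} [CommRing A]
    (bar : A ≃+* A) (hbarinv : ∀ a : A, bar (bar a) = a)
    (q q' : B → A) (hq : ∀ s, q s * q' s = 1) (hbarq : ∀ s, bar (q s) = q' s)
    -- the Hecke algebra `H`
    {H : Type*} [Ring H] [Algebra A H]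
    (T : W → H) (bH : Module.Basis W A H) (hbH : ∀ w : W, bH w = T w) (hT1 : T 1 = 1)
    (hTmul : ∀ (s : B) (w : W),
      (cs.length w < cs.length (cs.simple s * w) →
        T (cs.simple s) * T w = T (cs.simple s * w)) ∧
      (cs.length (cs.simple s * w) < cs.length w →
        T (cs.simple s) * T w = T (cs.simple s * w) + (q s - q' s) • T w))
    (barH : H → H)
    (hbarHadd : ∀ h h' : H, barH (h + h') = barH h + barH h')
    (hbarHmul : ∀ h h' : H, barH (h * h') = barH h * barH h')
    (hbarHsemi : ∀ (a : A) (h : H), barH (a • h) = bar a • barH h)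
    (hbarHinv : ∀ h : H, barH (barH h) = h)
    (hbarHT : ∀ s : B,
      barH (T (cs.simple s)) = T (cs.simple s) + (q' s - q s) • (1 : H))
    -- the algebra map `Φ` with `Φ(T_w) = ε_w T̄_w`
    (Φ : H →ₐ[A] H)
    (hΦ : ∀ w : W, Φ (T w) = ((-1 : A) ^ cs.length w) • barH (T w))
    -- the module `M(E_J, L)`
    {Mo : Type*} [AddCommGroup Mo] [Module A Mo] [Module H Mo] [IsScalarTower A H Mo]
    (Γ : E → Mo) (bM : Module.Basis E A Mo) (hbM : ∀ e : E, bM e = Γ e)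
    (hminus : ∀ (s : B) (w : E) (h : cs.simple s * (w : W) ∈ E),
      cs.length (cs.simple s * (w : W)) < cs.length (w : W) →
      T (cs.simple s) • Γ w = Γ ⟨cs.simple s * (w : W), h⟩ + (q s - q' s) • Γ w)
    (hplus : ∀ (s : B) (w : E) (h : cs.simple s * (w : W) ∈ E),
      cs.length (w : W) < cs.length (cs.simple s * (w : W)) →
      T (cs.simple s) • Γ w = Γ ⟨cs.simple s * (w : W), h⟩)
    (h0minus : ∀ (s : B) (w : E),
      cs.length (w : W) < cs.length (cs.simple s * (w : W)) →
      cs.simple s * (w : W) ∉ DJset cs J →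
      T (cs.simple s) • Γ w = - (q' s) • Γ w)
    (r : B → E → (E →₀ A))
    (hrsupp : ∀ (s : B) (w : E) (z : E), (r s w) z ≠ 0 →
      bruhatLE cs (z : W) (w : W) ∧ (z : W) ≠ (w : W))
    (h0plus : ∀ (s : B) (w : E),
      cs.length (w : W) < cs.length (cs.simple s * (w : W)) →
      cs.simple s * (w : W) ∈ DJset cs J →
      cs.simple s * (w : W) ∉ E →
      T (cs.simple s) • Γ w = q s • Γ w - (r s w).sum fun z a => a • Γ z)
    (barM : Mo → Mo)
    (hbarMadd : ∀ m m' : Mo, barM (m + m') = barM m + barM m')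
    (hbarM1 : barM (Γ ⟨1, hE1⟩) = Γ ⟨1, hE1⟩)
    (hbarMH : ∀ (h : H) (m : Mo), barM (h • m) = barH h • barM m)
    -- the dual module `M̃(E_J, L)`
    {Mt : Type*} [AddCommGroup Mt] [Module A Mt] [Module H Mt] [IsScalarTower A H Mt]
    (Γt : E → Mt) (bMt : Module.Basis E A Mt) (hbMt : ∀ e : E, bMt e = Γt e)
    (htminus : ∀ (s : B) (w : E) (h : cs.simple s * (w : W) ∈ E),
      cs.length (cs.simple s * (w : W)) < cs.length (w : W) →
      T (cs.simple s) • Γt w = Γt ⟨cs.simple s * (w : W), h⟩ + (q s - q' s) • Γt w)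
    (htplus : ∀ (s : B) (w : E) (h : cs.simple s * (w : W) ∈ E),
      cs.length (w : W) < cs.length (cs.simple s * (w : W)) →
      T (cs.simple s) • Γt w = Γt ⟨cs.simple s * (w : W), h⟩)
    (ht0minus : ∀ (s : B) (w : E),
      cs.length (w : W) < cs.length (cs.simple s * (w : W)) →
      cs.simple s * (w : W) ∉ DJset cs J →
      T (cs.simple s) • Γt w = q s • Γt w)
    (rt : B → E → (E →₀ A))
    (hrt : ∀ (s : B) (w : E) (z : E),
      (rt s w) z =
        (-1 : A) ^ (cs.length (z : W) + cs.length (w : W)) * bar ((r s w) z))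
    (ht0plus : ∀ (s : B) (w : E),
      cs.length (w : W) < cs.length (cs.simple s * (w : W)) →
      cs.simple s * (w : W) ∈ DJset cs J →
      cs.simple s * (w : W) ∉ E →
      T (cs.simple s) • Γt w = - (q' s) • Γt w + (rt s w).sum fun z a => a • Γt z)
    (barMt : Mt → Mt)
    (hbarMtadd : ∀ m m' : Mt, barMt (m + m') = barMt m + barMt m')
    (hbarMt1 : barMt (Γt ⟨1, hE1⟩) = Γt ⟨1, hE1⟩)
    (hbarMtH : ∀ (h : H) (m : Mt), barMt (h • m) = barH h • barMt m) :
    ∃ η : Mo →+ Mt,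
      η (Γ ⟨1, hE1⟩) = Γt ⟨1, hE1⟩ ∧
      (∀ (h : H) (m : Mo), η (h • m) = Φ h • η m) ∧
      (∀ η' : Mo →+ Mt,
        (η' (Γ ⟨1, hE1⟩) = Γt ⟨1, hE1⟩ ∧
          ∀ (h : H) (m : Mo), η' (h • m) = Φ h • η' m) → η' = η) ∧
      (∀ w : E, η (Γ w) = ((-1 : A) ^ cs.length (w : W)) • barMt (Γt w)) ∧
      (∀ m : Mo, η (barM m) = barMt (η m)) ∧
      Function.Bijective η ∧
      ∃ θ : Mt →+ Mo,
        (∀ m : Mo, θ (η m) = m) ∧ (∀ m : Mt, η (θ m) = m) ∧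
        θ (Γt ⟨1, hE1⟩) = Γ ⟨1, hE1⟩ ∧
        ∀ (h : H) (m : Mt), θ (h • m) = Φ h • θ m := by
    classical
  -- scalar commutation lemmas
  have hsmM : ∀ (a : A) (h : H) (m : Mo), h • (a • m) = a • (h • m) := by
    intro a h m
    calc h • (a • m) = h • ((a • (1:H)) • m) := by rw [smul_assoc, one_smul]
    _ = (h * (a • (1:H))) • m := (mul_smul _ _ _).symm
    _ = (a • (h * 1)) • m := by rw [mul_smul_comm]
    _ = a • (h • m) := by rw [mul_one, smul_assoc]
  have hsmMt : ∀ (a : A) (h : H) (m : Mt), h • (a • m) = a • (h • m) := by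
    intro a h m
    calc h • (a • m) = h • ((a • (1:H)) • m) := by rw [smul_assoc, one_smul]
    _ = (h * (a • (1:H))) • m := (mul_smul _ _ _).symm
    _ = (a • (h * 1)) • m := by rw [mul_smul_comm]
    _ = a • (h • m) := by rw [mul_one, smul_assoc]
  have hbarH1 : barH (1:H) = 1 := by
    have h1 := hbarHmul (barH 1) 1
    rw [mul_one, hbarHinv, one_mul] at h1
    exact h1.symm
  have hbarMsmul : ∀ (a : A) (m : Mo), barM (a • m) = bar a • barM m := by
    intro a m
    have h1 : a • m = (a • (1:H)) • m := by rw [smul_assoc, one_smul]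
    rw [h1, hbarMH, hbarHsemi, hbarH1, smul_assoc, one_smul]
  have hbarMtsmul : ∀ (a : A) (m : Mt), barMt (a • m) = bar a • barMt m := by
    intro a m
    have h1 : a • m = (a • (1:H)) • m := by rw [smul_assoc, one_smul]
    rw [h1, hbarMtH, hbarHsemi, hbarH1, smul_assoc, one_smul]
  have hbarsign : ∀ n : ℕ, bar ((-1:A)^n) = (-1:A)^n := fun n => by
    rw [map_pow, map_neg, map_one]
  have hsign2 : ∀ n : ℕ, ((-1:A)^n) * ((-1:A)^n) = 1 := fun n => by
    rw [← mul_pow, neg_mul_neg, one_mul, one_pow]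
  have hbarq' : ∀ i : B, bar (q' i) = q i := fun i => by rw [← hbarq, hbarinv]
  -- descent ⇒ membership in E
  have hsE : ∀ (i : B) (w : W), w ∈ E → cs.length (cs.simple i * w) < cs.length w →
      cs.simple i * w ∈ E := by
    intro i w hw hlt
    refine hIdeal w hw (cs.simple i * w) (cs.simple i) ?_ ?_
    · rw [← mul_assoc, cs.simple_mul_simple_self, one_mul]
    · rw [cs.length_simple]
      have := (cs.length_simple_mul w i).resolve_left (by omega)
      omega
  -- Γ w = T w • Γ 1 and Γt w = T w • Γt 1
  have hGamma : ∀ n : ℕ, ∀ w : E, cs.length (w:W) = n →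
      Γ w = T (w:W) • Γ ⟨1, hE1⟩ ∧ Γt w = T (w:W) • Γt ⟨1, hE1⟩ := by
    intro n
    induction n using Nat.strong_induction_on with
    | _ n ih =>
      intro w hw
      rcases eq_or_ne (w:W) 1 with h1 | h1
      · have hw1 : w = ⟨1, hE1⟩ := Subtype.ext h1
        constructor <;> (rw [hw1]; show _ = T ((1:W)) • _; rw [hT1, one_smul])
      · obtain ⟨i, hi⟩ := cs.exists_leftDescent_of_ne_one h1
        have hi' : cs.length (cs.simple i * (w:W)) < cs.length (w:W) := hi
        have hin : cs.simple i * (w:W) ∈ E := hsE i (w:W) w.2 hi'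
        have hlen : cs.length (cs.simple i * (w:W)) + 1 = cs.length (w:W) :=
          cs.isLeftDescent_iff.mp hi
        set w' : E := ⟨cs.simple i * (w:W), hin⟩ with hw'
        have hlw' : cs.length (w':W) = cs.length (cs.simple i * (w:W)) := rfl
        have hww : cs.simple i * (w':W) = (w:W) := cs.simple_mul_simple_cancel_left i
        have ihw' := ih (cs.length (w':W)) (by omega) w' rfl
        have hlt' : cs.length (w':W) < cs.length (cs.simple i * (w':W)) := by
          rw [hww]; omega
        have hTm : T (cs.simple i) * T (w':W) = T (w:W) := by
          rw [(hTmul i (w':W)).1 hlt', hww]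
        have hsub : (⟨cs.simple i * (w':W), by rw [hww]; exact w.2⟩ : E) = w :=
          Subtype.ext hww
        constructor
        · have h2 := hplus i w' (by rw [hww]; exact w.2) hlt'
          rw [hsub] at h2
          rw [← h2, ihw'.1, ← mul_smul, hTm]
        · have h2 := htplus i w' (by rw [hww]; exact w.2) hlt'
          rw [hsub] at h2
          rw [← h2, ihw'.2, ← mul_smul, hTm]
  have hG1 : ∀ w : E, Γ w = T (w:W) • Γ ⟨1, hE1⟩ := fun w => (hGamma _ w rfl).1
  have hGt1 : ∀ w : E, Γt w = T (w:W) • Γt ⟨1, hE1⟩ := fun w => (hGamma _ w rfl).2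
  have hbarMG : ∀ w : E, barM (Γ w) = barH (T (w:W)) • Γ ⟨1, hE1⟩ := fun w => by
    rw [hG1 w, hbarMH, hbarM1]
  have hbarMtG : ∀ w : E, barMt (Γt w) = barH (T (w:W)) • Γt ⟨1, hE1⟩ := fun w => by
    rw [hGt1 w, hbarMtH, hbarMt1]
  -- barMt and barM are involutive
  have hbarMtinv : ∀ m : Mt, barMt (barMt m) = m := by
    refine addHom_ext_basis bMt
      (f := (AddMonoidHom.mk' barMt hbarMtadd).comp (AddMonoidHom.mk' barMt hbarMtadd))
      (g := AddMonoidHom.id Mt) ?_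
    intro a e
    rw [hbMt]
    show barMt (barMt (a • Γt e)) = a • Γt e
    have h1 : a • Γt e = (a • T ((e:E):W)) • Γt ⟨1, hE1⟩ := by
      rw [hGt1 e, ← smul_assoc]
    rw [h1, hbarMtH, hbarMt1, hbarMtH, hbarMt1, hbarHinv]
  have hbarMinv : ∀ m : Mo, barM (barM m) = m := by
    refine addHom_ext_basis bM
      (f := (AddMonoidHom.mk' barM hbarMadd).comp (AddMonoidHom.mk' barM hbarMadd))
      (g := AddMonoidHom.id Mo) ?_
    intro a e
    rw [hbM]
    show barM (barM (a • Γ e)) = a • Γ e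
    have h1 : a • Γ e = (a • T ((e:E):W)) • Γ ⟨1, hE1⟩ := by
      rw [hG1 e, ← smul_assoc]
    rw [h1, hbarMH, hbarM1, hbarMH, hbarM1, hbarHinv]
  -- the map η
  set η : Mo →ₗ[A] Mt :=
    bM.constr A (fun e => ((-1:A)^cs.length ((e:E):W)) • barMt (Γt e)) with hηdef
  have hηΓ : ∀ e : E, η (Γ e) = ((-1:A)^cs.length ((e:E):W)) • barMt (Γt e) := fun e => by
    rw [← hbM]; exact bM.constr_basis A _ e
  have hη1 : η (Γ ⟨1, hE1⟩) = Γt ⟨1, hE1⟩ := by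
    rw [hηΓ]
    have h0 : cs.length (((⟨1, hE1⟩ : E) : E):W) = 0 := cs.length_one
    rw [h0, pow_zero, one_smul, hbarMt1]

  -- Φ applied to T of a simple reflection, acting on η(Γ w)
  have hrhs : ∀ (i : B) (w : E), Φ (T (cs.simple i)) • η (Γ w)
      = ((-1:A) * (-1:A)^cs.length ((w:E):W)) • barMt (T (cs.simple i) • Γt w) := by
    intro i w
    rw [hηΓ, hΦ, cs.length_simple, pow_one, smul_assoc, hsmMt, ← hbarMtH, mul_smul]
  -- η intertwines the action of T (simple i) via Φ, on basis elements
  have hηs : ∀ (i : B) (w : E),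
      η (T (cs.simple i) • Γ w) = Φ (T (cs.simple i)) • η (Γ w) := by
    intro i w
    rcases cs.length_simple_mul (w:W) i with hup | hdown
    · have hlt : cs.length (w:W) < cs.length (cs.simple i * (w:W)) := by omega
      by_cases hmem : cs.simple i * (w:W) ∈ E
      · rw [hplus i w hmem hlt, hηΓ, hrhs, ← htplus i w hmem hlt]
        congr 1
        show ((-1:A))^(cs.length (cs.simple i * (w:W))) = -1 * (-1:A)^cs.length ((w:E):W)
        rw [hup, pow_succ, mul_comm]
      · by_cases hDJ : cs.simple i * (w:W) ∈ DJset cs J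
        · -- the case E0+
          have hbarMtsum : ∀ (f : E →₀ A) (g : E → A → Mt),
              barMt (f.sum g) = f.sum fun z a => barMt (g z a) := fun f g =>
            map_finsuppSum (AddMonoidHom.mk' barMt hbarMtadd) f g
          rw [hrhs, h0plus i w hlt hDJ hmem, map_sub, map_smul, hηΓ, map_finsuppSum,
            ht0plus i w hlt hDJ hmem, hbarMtadd, hbarMtsmul, hbarMtsum,
            smul_add, Finsupp.smul_sum]
          simp only [map_smul, hηΓ, hbarMtsmul]
          rw [Finsupp.sum_of_support_subset (r i w)
              (Finset.subset_union_left (s₂ := (rt i w).support)) _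
              (fun z _ => by rw [zero_smul]),
            Finsupp.sum_of_support_subset (rt i w) Finset.subset_union_right _
              (fun z _ => by rw [map_zero, zero_smul, smul_zero])]
          have hterm : ∀ z ∈ (r i w).support ∪ (rt i w).support,
              (-1 * (-1:A)^cs.length ((w:E):W)) • (bar ((rt i w) z) • barMt (Γt z))
                = -(((r i w) z) • ((-1:A)^cs.length ((z:E):W) • barMt (Γt z))) := by
            intro z _
            simp only [smul_smul]
            rw [← neg_smul]
            congr 1
            rw [hrt, map_mul, hbarsign, hbarinv, pow_add]
            linear_combination (-((-1:A)^cs.length ((z:E):W)) * (r i w) z)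
              * hsign2 (cs.length ((w:E):W))
          rw [Finset.sum_congr rfl hterm, Finset.sum_neg_distrib, ← sub_eq_add_neg]
          congr 1
          rw [map_neg, hbarq']
          simp only [smul_smul]
          congr 1
          ring
        · -- the case E0-
          rw [hrhs, h0minus i w hlt hDJ, map_smul, hηΓ, ht0minus i w hlt hDJ,
            hbarMtsmul, hbarq]
          simp only [smul_smul]
          congr 1
          ring
    · -- the case E-
      have hlt' : cs.length (cs.simple i * (w:W)) < cs.length (w:W) := by omega
      have hmem : cs.simple i * (w:W) ∈ E := hsE i (w:W) w.2 hlt'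
      rw [hrhs, hminus i w hmem hlt', map_add, map_smul, hηΓ, hηΓ,
        htminus i w hmem hlt', hbarMtadd, hbarMtsmul, map_sub, hbarq, hbarq',
        smul_add]
      simp only [smul_smul]
      congr 1
      · congr 1
        show ((-1:A))^(cs.length (cs.simple i * (w:W))) = -1 * (-1:A)^cs.length ((w:E):W)
        rw [← hdown, pow_succ]
        ring
      · congr 1
        ring

  -- extend to all m by linearity
  have hηs' : ∀ (i : B) (m : Mo), η (T (cs.simple i) • m) = Φ (T (cs.simple i)) • η m := by
    intro i
    have hext := bM.ext (f₁ := ({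
        toFun := fun m => η (T (cs.simple i) • m)
        map_add' := fun m m' => by rw [smul_add, map_add]
        map_smul' := fun a m => by rw [hsmM, map_smul]; rfl } : Mo →ₗ[A] Mt))
      (f₂ := ({
        toFun := fun m => Φ (T (cs.simple i)) • η m
        map_add' := fun m m' => by rw [map_add, smul_add]
        map_smul' := fun a m => by rw [map_smul, hsmMt]; rfl } : Mo →ₗ[A] Mt))
      (fun e => by rw [hbM]; exact hηs i e)
    intro m
    exact congrArg (fun (f : Mo →ₗ[A] Mt) => f m) hext
  have hηT : ∀ n : ℕ, ∀ u : W, cs.length u = n → ∀ m : Mo,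
      η (T u • m) = Φ (T u) • η m := by
    intro n
    induction n using Nat.strong_induction_on with
    | _ n ih =>
      intro u hu m
      rcases eq_or_ne u 1 with rfl | hne
      · rw [hT1, one_smul, map_one, one_smul]
      · obtain ⟨i, hi⟩ := cs.exists_leftDescent_of_ne_one hne
        have hlen : cs.length (cs.simple i * u) + 1 = cs.length u :=
          cs.isLeftDescent_iff.mp hi
        have hT' : T (cs.simple i) * T (cs.simple i * u) = T u := by
          have h2 := (hTmul i (cs.simple i * u)).1
            (by rw [cs.simple_mul_simple_cancel_left]; omega)
          rwa [cs.simple_mul_simple_cancel_left] at h2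
        rw [← hT', mul_smul, hηs', ih (cs.length (cs.simple i * u)) (by omega) _ rfl,
          map_mul, mul_smul]
  have hηH : ∀ (h : H) (m : Mo), η (h • m) = Φ h • η m := by
    intro h m
    have hext := bH.ext (f₁ := ({
        toFun := fun h : H => η (h • m)
        map_add' := fun x y => by rw [add_smul, map_add]
        map_smul' := fun a x => by rw [smul_assoc, map_smul]; rfl } : H →ₗ[A] Mt))
      (f₂ := ({
        toFun := fun h : H => Φ h • η m
        map_add' := fun x y => by rw [map_add, add_smul]
        map_smul' := fun a x => by rw [map_smul, smul_assoc]; rfl } : H →ₗ[A] Mt))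
      (fun u => by rw [hbH]; exact hηT _ u rfl m)
    exact congrArg (fun (f : H →ₗ[A] Mt) => f h) hext
  -- Φ is an involution
  have hΦΦs : ∀ i : B, Φ (Φ (T (cs.simple i))) = T (cs.simple i) := by
    intro i
    rw [hΦ, cs.length_simple, pow_one, map_smul, hbarHT, map_add, map_smul, map_one,
      hΦ, cs.length_simple, pow_one, hbarHT]
    module
  have hΦΦT : ∀ n : ℕ, ∀ u : W, cs.length u = n → Φ (Φ (T u)) = T u := by
    intro n
    induction n using Nat.strong_induction_on with
    | _ n ih =>
      intro u hu
      rcases eq_or_ne u 1 with rfl | hne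
      · rw [hT1, map_one, map_one]
      · obtain ⟨i, hi⟩ := cs.exists_leftDescent_of_ne_one hne
        have hlen : cs.length (cs.simple i * u) + 1 = cs.length u :=
          cs.isLeftDescent_iff.mp hi
        have hT' : T (cs.simple i) * T (cs.simple i * u) = T u := by
          have h2 := (hTmul i (cs.simple i * u)).1
            (by rw [cs.simple_mul_simple_cancel_left]; omega)
          rwa [cs.simple_mul_simple_cancel_left] at h2
        rw [← hT', map_mul, map_mul, hΦΦs,
          ih (cs.length (cs.simple i * u)) (by omega) _ rfl]
  have hΦΦ : ∀ h : H, Φ (Φ h) = h := by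
    intro h
    have hext := bH.ext (f₁ := Φ.toLinearMap ∘ₗ Φ.toLinearMap) (f₂ := LinearMap.id)
      (fun u => by rw [hbH]; show Φ (Φ (T u)) = T u; exact hΦΦT _ u rfl)
    exact congrArg (fun (f : H →ₗ[A] H) => f h) hext
  have hbarHT' : ∀ u : W, barH (T u) = ((-1:A)^cs.length u) • Φ (T u) := by
    intro u
    rw [hΦ u, smul_smul, hsign2, one_smul]
  have hΦbarT : ∀ u : W, Φ (barH (T u)) = ((-1:A)^cs.length u) • T u := by
    intro u
    rw [hbarHT', map_smul, hΦΦ]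
  -- value of any intertwiner on a • Γ e
  have hval : ∀ (η' : Mo →+ Mt), η' (Γ ⟨1, hE1⟩) = Γt ⟨1, hE1⟩ →
      (∀ (h : H) (m : Mo), η' (h • m) = Φ h • η' m) →
      ∀ (a : A) (e : E), η' (a • Γ e) = Φ (a • T ((e:E):W)) • Γt ⟨1, hE1⟩ := by
    intro η' h1 hH a e
    have h2 : a • Γ e = (a • T ((e:E):W)) • Γ ⟨1, hE1⟩ := by rw [hG1 e, ← smul_assoc]
    rw [h2, hH, h1]
  -- η commutes with the bar involutions
  have hηbar : ∀ m : Mo, η (barM m) = barMt (η m) := by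
    refine addHom_ext_basis bM
      (f := η.toAddMonoidHom.comp (AddMonoidHom.mk' barM hbarMadd))
      (g := (AddMonoidHom.mk' barMt hbarMtadd).comp η.toAddMonoidHom) ?_
    intro a e
    rw [hbM]
    show η (barM (a • Γ e)) = barMt (η (a • Γ e))
    rw [hbarMsmul, map_smul, hbarMG, hηH, hη1, hΦbarT, smul_assoc, ← hGt1 e,
      map_smul, hηΓ, hbarMtsmul, hbarMtsmul, hbarsign, hbarMtinv]
  -- surjectivity
  have hsurjΓ : ∀ e : E, η (((-1:A)^cs.length ((e:E):W)) • barM (Γ e)) = Γt e := by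
    intro e
    rw [map_smul, hbarMG, hηH, hη1, hΦbarT, smul_assoc, smul_smul, hsign2, one_smul,
      ← hGt1 e]
  have hsurj : Function.Surjective η := by
    rw [← LinearMap.range_eq_top, ← top_le_iff, ← bMt.span_eq, Submodule.span_le]
    rintro x ⟨e, rfl⟩
    rw [SetLike.mem_coe, hbMt]
    exact ⟨_, hsurjΓ e⟩
  -- injectivity
  have hinj : Function.Injective η := by
    have hwΓ : ∀ e : E, (bMt.constr A (fun e : E => ((-1:A)^cs.length ((e:E):W)) • Γ e))
        (Γt e) = ((-1:A)^cs.length ((e:E):W)) • Γ e := fun e => by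
      rw [← hbMt]; exact bMt.constr_basis A _ e
    set wmap : Mt →ₗ[A] Mo :=
      bMt.constr A (fun e : E => ((-1:A)^cs.length ((e:E):W)) • Γ e) with hwdef
    set cfun : Mo → Mo := fun m =>
      Finsupp.linearCombination A (fun e : E => Γ e)
        ((bM.repr m).mapRange bar (map_zero bar)) with hcdef
    have hcadd : ∀ m m', cfun (m + m') = cfun m + cfun m' := by
      intro m m'
      rw [hcdef]
      simp only [map_add]
      rw [Finsupp.mapRange_add (map_add bar), map_add]
    have hcΓ : ∀ (a : A) (e : E), cfun (a • Γ e) = bar a • Γ e := by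
      intro a e
      have hre : bM.repr (a • Γ e) = Finsupp.single e a := by
        rw [← hbM, map_smul, bM.repr_self, Finsupp.smul_single, smul_eq_mul, mul_one]
      rw [hcdef]
      simp only
      rw [hre, Finsupp.mapRange_single, Finsupp.linearCombination_single]
    have hli : ∀ m : Mo, cfun (wmap (barMt (η m))) = m := by
      refine addHom_ext_basis bM
        (f := AddMonoidHom.mk' (fun m => cfun (wmap (barMt (η m))))
          (fun m m' => by
            show cfun (wmap (barMt (η (m + m'))))
              = cfun (wmap (barMt (η m))) + cfun (wmap (barMt (η m')))
            rw [map_add, hbarMtadd, map_add, hcadd]))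
        (g := AddMonoidHom.id Mo) ?_
      intro a e
      rw [hbM]
      show cfun (wmap (barMt (η (a • Γ e)))) = a • Γ e
      have h3 : ((-1:A)^cs.length ((e:E):W)) • (((-1:A)^cs.length ((e:E):W)) • Γ e)
          = Γ e := by rw [smul_smul, hsign2, one_smul]
      rw [map_smul, hηΓ, hbarMtsmul, hbarMtsmul, hbarsign, hbarMtinv, map_smul,
        map_smul, hwΓ, h3, hcΓ, hbarinv]
    exact Function.LeftInverse.injective (g := fun mt => cfun (wmap (barMt mt))) hli
  have hbij : Function.Bijective η := ⟨hinj, hsurj⟩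
  have hηθ : ∀ m : Mt, η ((LinearEquiv.ofBijective η hbij).symm m) = m := fun m =>
    (LinearEquiv.ofBijective η hbij).apply_symm_apply m
  refine ⟨η.toAddMonoidHom, hη1, hηH, ?_, hηΓ, hηbar, hbij,
    (LinearEquiv.ofBijective η hbij).symm.toLinearMap.toAddMonoidHom,
    ?_, ?_, ?_, ?_⟩
  · -- uniqueness
    rintro η' ⟨h1, h2⟩
    apply AddMonoidHom.ext
    refine addHom_ext_basis bM (f := η') (g := η.toAddMonoidHom) ?_
    intro a e
    rw [hbM]
    rw [hval η' h1 h2 a e]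
    exact (hval η.toAddMonoidHom hη1 hηH a e).symm
  · -- θ ∘ η = id
    intro m
    apply hinj
    show η ((LinearEquiv.ofBijective η hbij).symm (η m)) = η m
    rw [hηθ]
  · -- η ∘ θ = id
    intro m
    show η ((LinearEquiv.ofBijective η hbij).symm m) = m
    exact hηθ m
  · -- θ Γt 1 = Γ 1
    apply hinj
    show η ((LinearEquiv.ofBijective η hbij).symm (Γt ⟨1, hE1⟩)) = η (Γ ⟨1, hE1⟩)
    rw [hηθ, hη1]
  · -- θ equivariance
    intro h m
    apply hinj
    show η ((LinearEquiv.ofBijective η hbij).symm (h • m))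
      = η (Φ h • (LinearEquiv.ofBijective η hbij).symm m)
    rw [hηθ, hηH, hΦΦ, hηθ]
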